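/- If a permutation-word w ∈ S_n has a factor sr with s > r+1, and w' is obtained from w by exchanging the positions of r and s, then N(w') = N(w) + 1, where N(w) = Σ_{1≤k≤n-1} k(n-k)·γ_{k,k+1}(w) − Σ_{1≤i<j≤n} γ_{ij}(w). -/

import Mathlib

/-- `gamma w i j = 1` if `j` appears before `i` in the word `w`, else `0`. -/
def gamma (w : List ℕ) (i j : ℕ) : ℤ := if w.idxOf j < w.idxOf i then 1 else 0

/-- `N(w) = Σ_{1≤k≤n-1} k(n-k)·γ_{k,k+1}(w) − Σ_{1≤i<j≤n} γ_{ij}(w)`. -/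
def wordN (n : ℕ) (w : List ℕ) : ℤ :=
  (∑ k ∈ Finset.Icc 1 (n - 1), (k : ℤ) * ((n : ℤ) - (k : ℤ)) * gamma w k (k + 1))
  - ∑ i ∈ Finset.Icc 1 n, ∑ j ∈ Finset.Icc 1 n, if i < j then gamma w i j else 0

/-- Index facts for an element different from `r` and `s`. -/
lemma idx_other (u v : List ℕ) (r s x : ℕ) (hxr : x ≠ r) (hxs : x ≠ s) :
    List.idxOf x (u ++ [r, s] ++ v) = List.idxOf x (u ++ [s, r] ++ v) ∧
    (List.idxOf x (u ++ [s, r] ++ v) < u.length ∨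
      u.length + 2 ≤ List.idxOf x (u ++ [s, r] ++ v)) := by
  rw [List.append_assoc, List.append_assoc]
  by_cases hx : x ∈ u
  · rw [List.idxOf_append_of_mem hx, List.idxOf_append_of_mem hx]
    exact ⟨rfl, Or.inl (List.idxOf_lt_length_iff.2 hx)⟩
  · rw [List.idxOf_append_of_notMem hx, List.idxOf_append_of_notMem hx]
    have h1 : List.idxOf x ([r, s] ++ v) = List.idxOf x v + 2 := by
      show List.idxOf x (r :: s :: v) = _
      rw [List.idxOf_cons_ne _ (Ne.symm hxr), List.idxOf_cons_ne _ (Ne.symm hxs)]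
    have h2 : List.idxOf x ([s, r] ++ v) = List.idxOf x v + 2 := by
      show List.idxOf x (s :: r :: v) = _
      rw [List.idxOf_cons_ne _ (Ne.symm hxs), List.idxOf_cons_ne _ (Ne.symm hxr)]
    rw [h1, h2]
    exact ⟨rfl, Or.inr (by omega)⟩

lemma idx_rs (u v : List ℕ) (r s : ℕ) (hru : r ∉ u) (hsu : s ∉ u) (hrs : r ≠ s) :
    List.idxOf r (u ++ [s, r] ++ v) = u.length + 1 ∧
    List.idxOf s (u ++ [s, r] ++ v) = u.length ∧
    List.idxOf r (u ++ [r, s] ++ v) = u.length ∧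
    List.idxOf s (u ++ [r, s] ++ v) = u.length + 1 := by
  rw [List.append_assoc, List.append_assoc, List.idxOf_append_of_notMem hru,
    List.idxOf_append_of_notMem hsu, List.idxOf_append_of_notMem hru,
    List.idxOf_append_of_notMem hsu]
  show u.length + List.idxOf r (s :: r :: v) = _ ∧
    u.length + List.idxOf s (s :: r :: v) = _ ∧
    u.length + List.idxOf r (r :: s :: v) = _ ∧
    u.length + List.idxOf s (r :: s :: v) = _
  rw [List.idxOf_cons_ne _ hrs, List.idxOf_cons_self, List.idxOf_cons_self,
    List.idxOf_cons_ne _ (Ne.symm hrs), List.idxOf_cons_self, List.idxOf_cons_self]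
  omega

/-- All `gamma` values are preserved except for the pair `{r, s}` itself. -/
lemma gamma_pres (u v : List ℕ) (r s : ℕ) (hru : r ∉ u) (hsu : s ∉ u) (hrs : r ≠ s)
    (i j : ℕ) (h1 : ¬(i = r ∧ j = s)) (h2 : ¬(i = s ∧ j = r)) :
    gamma (u ++ [r, s] ++ v) i j = gamma (u ++ [s, r] ++ v) i j := by
  obtain ⟨ir, is0, ir', is'⟩ := idx_rs u v r s hru hsu hrs
  have key : (List.idxOf j (u ++ [r, s] ++ v) < List.idxOf i (u ++ [r, s] ++ v)) ↔
      (List.idxOf j (u ++ [s, r] ++ v) < List.idxOf i (u ++ [s, r] ++ v)) := by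
    by_cases hir : i = r
    · have hjs : j ≠ s := fun h => h1 ⟨hir, h⟩
      rw [hir]
      by_cases hjr : j = r
      · rw [hjr, ir, ir']; omega
      · obtain ⟨e, ho⟩ := idx_other u v r s j hjr hjs
        rw [e, ir, ir']; omega
    · by_cases his : i = s
      · rw [his]
        by_cases hjs : j = s
        · rw [hjs, is0, is']; omega
        · have hjr : j ≠ r := fun h => h2 ⟨his, h⟩
          obtain ⟨e, ho⟩ := idx_other u v r s j hjr hjs
          rw [e, is0, is']; omega
      · obtain ⟨e1, ho1⟩ := idx_other u v r s i hir his
        by_cases hjr : j = r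
        · rw [hjr, e1, ir, ir']; omega
        · by_cases hjs : j = s
          · rw [hjs, e1, is0, is']; omega
          · obtain ⟨e2, ho2⟩ := idx_other u v r s j hjr hjs
            rw [e1, e2]
  simp only [gamma, key]

theorem N_exchange_factor (n : ℕ) (w : List ℕ) (r s : ℕ)
    (hperm : w.Perm (List.range' 1 n)) (hrs : r + 1 < s)
    (hfac : [s, r] <:+: w) :
    wordN n (w.map (fun x => if x = r then s else if x = s then r else x))
      = wordN n w + 1 := by
  obtain ⟨u, v, huv⟩ := hfac
  have hw : w = u ++ [s, r] ++ v := by rw [← huv]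
  have hnd : w.Nodup := hperm.nodup_iff.2 List.nodup_range'
  rw [hw] at hnd
  obtain ⟨hnd1, hndv, hdis2⟩ := List.nodup_append.1 hnd
  obtain ⟨hndu, _, hdis1⟩ := List.nodup_append.1 hnd1
  have hru : r ∉ u := fun h => hdis1 _ h _ (by simp) rfl
  have hsu : s ∉ u := fun h => hdis1 _ h _ (by simp) rfl
  have hrv : r ∉ v := fun h => hdis2 _ (by simp) _ h rfl
  have hsv : s ∉ v := fun h => hdis2 _ (by simp) _ h rfl
  have hrsne : r ≠ s := by omega
  have hrw : r ∈ w := by rw [hw]; simp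
  have hsw : s ∈ w := by rw [hw]; simp
  have hr_mem : r ∈ Finset.Icc 1 n := by
    have := List.mem_range'_1.1 (hperm.mem_iff.1 hrw)
    simp only [Finset.mem_Icc]; omega
  have hs_mem : s ∈ Finset.Icc 1 n := by
    have := List.mem_range'_1.1 (hperm.mem_iff.1 hsw)
    simp only [Finset.mem_Icc]; omega
  have hmap : w.map (fun x => if x = r then s else if x = s then r else x)
      = u ++ [r, s] ++ v := by
    rw [hw]
    simp only [List.map_append]
    congr 1
    · congr 1
      · rw [List.map_congr_left (g := id) (fun a ha => by
          have h1 : a ≠ r := fun h => hru (h ▸ ha)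
          have h2 : a ≠ s := fun h => hsu (h ▸ ha)
          simp [h1, h2]), List.map_id]
      · simp [hrsne, Ne.symm hrsne]
    · rw [List.map_congr_left (g := id) (fun a ha => by
        have h1 : a ≠ r := fun h => hrv (h ▸ ha)
        have h2 : a ≠ s := fun h => hsv (h ▸ ha)
        simp [h1, h2]), List.map_id]
  rw [hmap, hw]
  obtain ⟨ir, is0, ir', is'⟩ := idx_rs u v r s hru hsu hrsne
  unfold wordN
  have hsum1 : (∑ k ∈ Finset.Icc 1 (n - 1),
      (k : ℤ) * ((n : ℤ) - (k : ℤ)) * gamma (u ++ [r, s] ++ v) k (k + 1)) =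
      ∑ k ∈ Finset.Icc 1 (n - 1),
        (k : ℤ) * ((n : ℤ) - (k : ℤ)) * gamma (u ++ [s, r] ++ v) k (k + 1) := by
    refine Finset.sum_congr rfl fun k _ => ?_
    rw [gamma_pres u v r s hru hsu hrsne k (k + 1) (by omega) (by omega)]
  have key : ∀ i j : ℕ,
      (if i < j then gamma (u ++ [r, s] ++ v) i j else 0) =
      (if i < j then gamma (u ++ [s, r] ++ v) i j else 0) +
        (if i = r then (if j = s then (-1 : ℤ) else 0) else 0) := by
    intro i j
    by_cases hcase : i = r ∧ j = s
    · obtain ⟨e1, e2⟩ := hcase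
      rw [e1, e2]
      have hlt : r < s := by omega
      simp only [hlt, if_true, if_pos rfl]
      unfold gamma
      rw [ir, is0, ir', is']
      simp only [if_neg (by omega : ¬ u.length + 1 < u.length),
        if_pos (by omega : u.length < u.length + 1)]
      ring
    · by_cases hcase2 : i = s ∧ j = r
      · obtain ⟨e1, e2⟩ := hcase2
        rw [e1, e2]
        have hlt : ¬ s < r := by omega
        have hne : s ≠ r := by omega
        simp [hlt, hne]
      · rw [gamma_pres u v r s hru hsu hrsne i j hcase hcase2]
        by_cases h1 : i = r
        · by_cases h2 : j = s
          · exact absurd ⟨h1, h2⟩ hcase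
          · simp [h1, h2]
        · simp [h1]
  have hsum2 : (∑ i ∈ Finset.Icc 1 n, ∑ j ∈ Finset.Icc 1 n,
      if i < j then gamma (u ++ [r, s] ++ v) i j else 0) =
      (∑ i ∈ Finset.Icc 1 n, ∑ j ∈ Finset.Icc 1 n,
        if i < j then gamma (u ++ [s, r] ++ v) i j else 0) - 1 := by
    calc (∑ i ∈ Finset.Icc 1 n, ∑ j ∈ Finset.Icc 1 n,
        if i < j then gamma (u ++ [r, s] ++ v) i j else 0)
        = ∑ i ∈ Finset.Icc 1 n, ((∑ j ∈ Finset.Icc 1 n,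
            if i < j then gamma (u ++ [s, r] ++ v) i j else 0) +
          ∑ j ∈ Finset.Icc 1 n, (if i = r then (if j = s then (-1 : ℤ) else 0) else 0)) := by
          refine Finset.sum_congr rfl fun i _ => ?_
          rw [← Finset.sum_add_distrib]
          exact Finset.sum_congr rfl fun j _ => key i j
      _ = (∑ i ∈ Finset.Icc 1 n, ∑ j ∈ Finset.Icc 1 n,
            if i < j then gamma (u ++ [s, r] ++ v) i j else 0) +
          ∑ i ∈ Finset.Icc 1 n, ∑ j ∈ Finset.Icc 1 n,
            (if i = r then (if j = s then (-1 : ℤ) else 0) else 0) := by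
          rw [Finset.sum_add_distrib]
      _ = (∑ i ∈ Finset.Icc 1 n, ∑ j ∈ Finset.Icc 1 n,
            if i < j then gamma (u ++ [s, r] ++ v) i j else 0) - 1 := by
          have hinner : ∀ i, (∑ j ∈ Finset.Icc 1 n,
              (if i = r then (if j = s then (-1 : ℤ) else 0) else 0)) =
              if i = r then (if s ∈ Finset.Icc 1 n then (-1 : ℤ) else 0) else 0 := by
            intro i
            by_cases h : i = r
            · simp only [h, if_true]
              exact Finset.sum_ite_eq' (Finset.Icc 1 n) s fun _ => (-1 : ℤ)
            · simp [h]
          rw [Finset.sum_congr rfl fun i _ => hinner i,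
            Finset.sum_ite_eq' (Finset.Icc 1 n) r
              (fun _ => if s ∈ Finset.Icc 1 n then (-1 : ℤ) else 0)]
          simp only [hr_mem, hs_mem, if_true]
          ring
  rw [hsum1, hsum2]
  ring
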